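/- Let f be a quasiperiodically forced circle diffeomorphism with fibre maps f_θ that are C¹ with ∂_x f_θ(x) > 0. Suppose φ : 𝕋¹ → 𝕋¹ is a continuous invariant graph (f_θ(φ(θ)) = φ(θ+ω) for all θ) with ω irrational. If the Lyapunov exponent λ(φ) = ∫_{𝕋¹} log ∂_x f_θ(φ(θ)) dθ is strictly negative, then there exists ε > 0 and λ' < 0 such that for all θ ∈ 𝕋¹ and all x with d(x, φ(θ)) < ε, the forward orbit of (θ,x) converges to the graph: d(f^n_θ(x), φ(θ+nω)) → 0 as n → ∞. -/

import Mathlib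

open Filter Real

section AuxLemmas
open Complex Finset

lemma geom_bound (z : ℂ) (hz : z ≠ 1) (h1 : ‖z‖ = 1) (n : ℕ) :
    ‖∑ k ∈ Finset.range n, z ^ k‖ ≤ 2 / ‖1 - z‖ := by
  rw [geom_sum_eq hz, norm_div, norm_sub_rev z 1]
  have hpos : 0 < ‖1 - z‖ := by
    rw [norm_pos_iff, sub_ne_zero]; exact fun h => hz h.symm
  gcongr
  calc ‖z ^ n - 1‖ ≤ ‖z ^ n‖ + ‖(1:ℂ)‖ := norm_sub_le _ _
    _ ≤ 2 := by rw [norm_pow, h1]; norm_num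

lemma fourier_mul_arg (j : ℤ) (x y : AddCircle (1:ℝ)) :
    (fourier j (x + y) : ℂ) = fourier j x * fourier j y := by
  simp [fourier_apply, smul_add, AddCircle.toCircle_add]

lemma fourier_orbit (j : ℤ) (θ ω : ℝ) (k : ℕ) :
    (fourier j (((θ + k * ω : ℝ)) : AddCircle (1:ℝ)) : ℂ) =
      (fourier j ((θ : ℝ) : AddCircle (1:ℝ)) : ℂ) *
        (fourier j ((ω : ℝ) : AddCircle (1:ℝ)) : ℂ) ^ k := by
  induction k with
  | zero => simp
  | succ k ih =>
    rw [show (θ + ((k+1:ℕ)) * ω : ℝ) = ((θ + k*ω) + ω : ℝ) by push_cast; ring,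
      QuotientAddGroup.mk_add, fourier_mul_arg, ih, pow_succ, mul_assoc]

lemma fourier_ne_one (ω : ℝ) (hω : Irrational ω) (j : ℤ) (hj : j ≠ 0) :
    (fourier j ((ω : ℝ) : AddCircle (1:ℝ)) : ℂ) ≠ 1 := by
  intro h
  rw [fourier_apply] at h
  have h1 : AddCircle.toCircle (j • ((ω:ℝ) : AddCircle (1:ℝ)))
      = AddCircle.toCircle (0 : AddCircle (1:ℝ)) := by
    rw [AddCircle.toCircle_zero]; ext1; simpa using h
  have h2 := AddCircle.injective_toCircle one_ne_zero h1
  rw [← QuotientAddGroup.mk_zsmul] at h2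
  have h3 : ((j • ω : ℝ) : AddCircle (1:ℝ)) = 0 := h2
  rw [AddCircle.coe_eq_zero_iff] at h3
  obtain ⟨n, hn⟩ := h3
  have : Irrational (j • ω) := by simpa [zsmul_eq_mul] using hω.intCast_mul hj
  rw [← hn] at this
  exact this ⟨n, by push_cast; simp⟩

lemma norm_fourier_eq_one (j : ℤ) (x : AddCircle (1:ℝ)) : ‖(fourier j x : ℂ)‖ = 1 :=
  Circle.norm_coe _

lemma birkhoff_upper (ω : ℝ) (hω : Irrational ω) (g : ℝ → ℝ) (hg : Continuous g)
    (hp : Function.Periodic g 1) {c : ℝ} (hc : (∫ θ in (0:ℝ)..1, g θ) < c) :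
    ∃ N : ℕ, 0 < N ∧ ∀ θ : ℝ, ∑ k ∈ Finset.range N, g (θ + k * ω) < N * c := by
  set lam := ∫ θ in (0:ℝ)..1, g θ with hlam
  set η := (c - lam)/3 with hη
  have hηpos : 0 < η := by rw [hη]; linarith
  have hGcont : Continuous (hp.lift) := by
    rw [(QuotientAddGroup.isQuotientMap_mk _).continuous_iff]; exact hg
  set Gc : C(AddCircle (1:ℝ), ℂ) :=
    ⟨fun x => (hp.lift x : ℂ), continuous_ofReal.comp hGcont⟩ with hGcdef
  have hmem : Gc ∈ closure ((Submodule.span ℂ (Set.range (@fourier 1))) : Set _) := by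
    rw [← Submodule.topologicalClosure_coe, span_fourier_closure_eq_top]
    trivial
  obtain ⟨P, hPspan, hPdist⟩ := Metric.mem_closure_iff.mp hmem η hηpos
  obtain ⟨n, coef, vec, hPsum⟩ := Submodule.mem_span_set'.mp hPspan
  choose jdx hjdx using fun i => (vec i).2
  set z : Fin n → ℂ := fun i => (fourier (jdx i) ((ω : ℝ) : AddCircle (1:ℝ)) : ℂ) with hz
  set B : ℝ := ∑ i, ‖coef i‖ * (if jdx i = 0 then 0 else 2 / ‖1 - z i‖) with hB
  have hBnonneg : 0 ≤ B := Finset.sum_nonneg fun i _ => by positivity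
  set K : ℂ := ∑ i, if jdx i = 0 then coef i else 0 with hK
  have hPapp : ∀ x : AddCircle (1:ℝ), P x = ∑ i, coef i * (fourier (jdx i) x : ℂ) := by
    intro x
    rw [← hPsum]
    simp only [ContinuousMap.coe_sum, Finset.sum_apply, ContinuousMap.coe_smul, Pi.smul_apply,
      smul_eq_mul]
    exact Finset.sum_congr rfl fun i _ => by rw [hjdx i]
  -- key polynomial estimate
  have key : ∀ (m : ℕ) (θ : ℝ),
      ‖(∑ k ∈ Finset.range m, P ((θ + k * ω : ℝ) : AddCircle (1:ℝ))) - m * K‖ ≤ B := by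
    intro m θ
    have h1 : (∑ k ∈ Finset.range m, P ((θ + k * ω : ℝ) : AddCircle (1:ℝ))) - m * K
        = ∑ i, coef i * (if jdx i = 0 then 0 else
            (fourier (jdx i) ((θ:ℝ) : AddCircle (1:ℝ)) : ℂ) * ∑ k ∈ Finset.range m, z i ^ k) := by
      simp only [hPapp, fourier_orbit]
      rw [Finset.sum_comm, hK, Finset.mul_sum, ← Finset.sum_sub_distrib]
      refine Finset.sum_congr rfl fun i _ => ?_
      by_cases hji : jdx i = 0
      · simp [hji, mul_comm]
      · simp only [hji, if_false, mul_zero, sub_zero, Finset.mul_sum]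
        try exact Finset.sum_congr rfl fun k _ => by ring
    rw [h1]
    refine (norm_sum_le _ _).trans ?_
    rw [hB]
    refine Finset.sum_le_sum fun i _ => ?_
    rw [norm_mul]
    by_cases hji : jdx i = 0
    · simp [hji]
    · simp only [hji, if_false]
      gcongr
      rw [norm_mul, norm_fourier_eq_one, one_mul]
      exact geom_bound _ (fourier_ne_one ω hω _ hji) (norm_fourier_eq_one _ _) m
  -- Birkhoff sums of g
  have hSapp : ∀ (m : ℕ) (θ : ℝ), ((∑ k ∈ Finset.range m, g (θ + k * ω) : ℝ) : ℂ)
      = ∑ k ∈ Finset.range m, Gc ((θ + k * ω : ℝ) : AddCircle (1:ℝ)) := by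
    intro m θ
    have hterm : ∀ k : ℕ, Gc ((θ + k * ω : ℝ) : AddCircle (1:ℝ))
        = ((g (θ + k * ω) : ℝ) : ℂ) := by
      intro k
      show ((hp.lift ((θ + k * ω : ℝ) : AddCircle (1:ℝ)) : ℝ) : ℂ) = _
      rw [Function.Periodic.lift_coe]
    rw [Finset.sum_congr rfl fun k _ => hterm k]
    push_cast
    rfl
  have hdiff : ∀ (m : ℕ) (θ : ℝ),
      |(∑ k ∈ Finset.range m, g (θ + k * ω)) - m * K.re| ≤ m * η + B := by
    intro m θ
    set s : ℝ := ∑ k ∈ Finset.range m, g (θ + k * ω) with hsdef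
    have h2 : |s - m * K.re| ≤ ‖(s : ℂ) - m * K‖ := by
      have hre : ((s : ℂ) - m * K).re = s - m * K.re := by simp
      calc |s - m * K.re| = |((s : ℂ) - m * K).re| := by rw [hre]
        _ ≤ ‖(s : ℂ) - m * K‖ := by
            exact Complex.abs_re_le_norm _
    refine h2.trans ?_
    have h3 : (s : ℂ) - m * K
        = (∑ k ∈ Finset.range m, (Gc ((θ + k * ω : ℝ) : AddCircle (1:ℝ))
              - P ((θ + k * ω : ℝ) : AddCircle (1:ℝ))))
          + ((∑ k ∈ Finset.range m, P ((θ + k * ω : ℝ) : AddCircle (1:ℝ))) - m * K) := by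
      rw [hsdef, hSapp m θ, Finset.sum_sub_distrib]; ring
    rw [h3]
    refine (norm_add_le _ _).trans ?_
    have h4 : ‖∑ k ∈ Finset.range m, (Gc ((θ + k * ω : ℝ) : AddCircle (1:ℝ))
        - P ((θ + k * ω : ℝ) : AddCircle (1:ℝ)))‖ ≤ m * η := by
      refine (norm_sum_le _ _).trans ?_
      have h5 : ∀ k ∈ Finset.range m, ‖Gc ((θ + k * ω : ℝ) : AddCircle (1:ℝ))
          - P ((θ + k * ω : ℝ) : AddCircle (1:ℝ))‖ ≤ η := by
        intro k _
        calc ‖Gc _ - P _‖ = ‖(Gc - P) ((θ + k * ω : ℝ) : AddCircle (1:ℝ))‖ := by simp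
          _ ≤ ‖Gc - P‖ := ContinuousMap.norm_coe_le_norm _ _
          _ ≤ η := by rw [← dist_eq_norm]; exact hPdist.le
      calc (∑ k ∈ Finset.range m, ‖Gc ((θ + k * ω : ℝ) : AddCircle (1:ℝ))
            - P ((θ + k * ω : ℝ) : AddCircle (1:ℝ))‖)
          ≤ ∑ _k ∈ Finset.range m, η := Finset.sum_le_sum h5
        _ = m * η := by rw [Finset.sum_const, Finset.card_range, nsmul_eq_mul]
    linarith [key m θ]
  -- integral of the Birkhoff sum
  have hSc : ∀ m : ℕ, Continuous fun θ : ℝ => ∑ k ∈ Finset.range m, g (θ + k * ω) :=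
    fun m => continuous_finset_sum _ fun k _ =>
      hg.comp (continuous_id.add continuous_const)
  have hint : ∀ m : ℕ, (∫ θ in (0:ℝ)..1, ∑ k ∈ Finset.range m, g (θ + k * ω)) = m * lam := by
    intro m
    have hkint : ∀ k ∈ Finset.range m, IntervalIntegrable (fun θ : ℝ => g (θ + k * ω))
        MeasureTheory.volume 0 1 := fun k _ =>
      Continuous.intervalIntegrable (hg.comp (continuous_add_right _)) _ _
    rw [intervalIntegral.integral_finset_sum hkint]
    have heach : ∀ a : ℝ, (∫ θ in (0:ℝ)..1, g (θ + a)) = lam := by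
      intro a
      rw [intervalIntegral.integral_comp_add_right]
      have h6 := hp.intervalIntegral_add_eq a 0
      rw [zero_add] at h6
      rw [show (0:ℝ) + a = a by ring, show (1:ℝ) + a = a + 1 by ring]
      exact h6
    simp only [heach, Finset.sum_const, Finset.card_range, nsmul_eq_mul]
  -- choose N
  set N : ℕ := ⌊2 * B / η⌋₊ + 1 with hN
  have hNpos : 0 < N := Nat.succ_pos _
  have hNlarge : 2 * B < N * η := by
    have h7 : 2 * B / η < (N:ℝ) := by
      rw [hN]; push_cast; exact Nat.lt_floor_add_one _
    calc 2 * B = (2 * B / η) * η := by field_simp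
      _ < N * η := by exact mul_lt_mul_of_pos_right h7 hηpos
  have hKre : (N:ℝ) * K.re ≤ N * lam + N * η + B := by
    have hmono : (∫ θ in (0:ℝ)..1, ((N:ℝ) * K.re - (N * η + B)))
        ≤ ∫ θ in (0:ℝ)..1, ∑ k ∈ Finset.range N, g (θ + k * ω) := by
      refine intervalIntegral.integral_mono_on zero_le_one
        (intervalIntegrable_const) ((hSc N).intervalIntegrable _ _) (fun θ _ => ?_)
      have h8 := hdiff N θ
      have h9 := abs_le.mp h8
      linarith [h9.1]
    rw [hint N, intervalIntegral.integral_const] at hmono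
    simp only [sub_zero, one_smul, smul_eq_mul] at hmono
    linarith
  refine ⟨N, hNpos, fun θ => ?_⟩
  have h10 := abs_le.mp (hdiff N θ)
  have hceq : (N:ℝ) * c = N * lam + 3 * (N * η) := by rw [hη]; ring
  have : (∑ k ∈ Finset.range N, g (θ + k * ω)) ≤ N * K.re + (N * η + B) := by
    linarith [h10.2]
  linarith

lemma addCircle_norm_le (x : ℝ) : ‖(x : AddCircle (1:ℝ))‖ ≤ |x| := by
  rw [AddCircle.norm_eq]
  simp only [inv_one, one_mul, mul_one]
  rcases le_or_gt (1/2) |x| with h | h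
  · calc |x - round x| ≤ 1/2 := abs_sub_round x
      _ ≤ |x| := h
  · rw [round_eq_zero_iff.mpr]
    · simp
    · constructor <;> [linarith [abs_lt.mp h]; linarith [abs_lt.mp h]]


end AuxLemmas

/-- A continuous invariant graph φ of a qpf circle diffeomorphism
(over an irrational rotation) with strictly negative Lyapunov exponent
attracts all nearby orbits: there are ε > 0 and lam < 0 such that for every θ
and every x with |x - φ(θ)| < ε, the circle distance
`d(fⁿ_θ(x), φ(θ + nω))` tends to 0.  The system is represented by lifts
`F θ : ℝ → ℝ` (degree one, 1-periodic in θ), with iterates `Fit`. -/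
theorem negative_lyapunov_attracts (ω : ℝ) (hω : Irrational ω)
    (F : ℝ → ℝ → ℝ)
    (hper : ∀ θ x, F (θ + 1) x = F θ x)
    (hdeg : ∀ θ x, F θ (x + 1) = F θ x + 1)
    (hdiff : ∀ θ, Differentiable ℝ (F θ))
    (hpos : ∀ θ x, 0 < deriv (F θ) x)
    (hdcont : Continuous fun p : ℝ × ℝ => deriv (F p.1) p.2)
    (φ : ℝ → ℝ) (hφc : Continuous φ) (hφper : ∀ θ, φ (θ + 1) = φ θ)
    (hinv : ∀ θ, F θ (φ θ) = φ (θ + ω))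
    (Fit : ℕ → ℝ → ℝ → ℝ)
    (hFit0 : ∀ θ x, Fit 0 θ x = x)
    (hFitS : ∀ n θ x, Fit (n + 1) θ x = F (θ + n * ω) (Fit n θ x))
    (hLyap : (∫ θ in (0:ℝ)..1, Real.log (deriv (F θ) (φ θ))) < 0) :
    ∃ ε > (0:ℝ), ∃ lam < (0:ℝ), ∀ θ x, |x - φ θ| < ε →
      Tendsto (fun n : ℕ =>
          ‖((Fit n θ x - φ (θ + n * ω) : ℝ) : AddCircle (1 : ℝ))‖)
        atTop (nhds 0) := by
  classical
  set D : ℝ × ℝ → ℝ := fun p => deriv (F p.1) p.2 with hD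
  have hDpos : ∀ p, 0 < D p := fun p => hpos _ _
  have hDθper : ∀ x : ℝ, Function.Periodic (fun θ => D (θ, x)) 1 := by
    intro x θ
    show deriv (F (θ + 1)) x = deriv (F θ) x
    rw [show F (θ + 1) = F θ from funext (hper θ)]
  have hDxper : ∀ θ : ℝ, Function.Periodic (fun x => D (θ, x)) 1 := by
    intro θ x
    show deriv (F θ) (x + 1) = deriv (F θ) x
    have h1 : deriv (fun y => F θ (y + 1)) x = deriv (F θ) (x + 1) :=
      deriv_comp_add_const _ _ x
    have h2 : (fun y => F θ (y + 1)) = fun y => F θ y + 1 := funext fun y => hdeg θ y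
    rw [← h1, h2, deriv_add_const]
  have hshift : ∀ (f : ℝ → ℝ), Function.Periodic f 1 → ∀ (x : ℝ) (n : ℤ), f (x + n) = f x := by
    intro f hf x n
    have := hf.sub_int_mul_eq (x := x) (n := -n)
    simpa using this
  have hDeq : ∀ (θ x : ℝ) (m n : ℤ), D (θ + m, x + n) = D (θ, x) := by
    intro θ x m n
    calc D (θ + m, x + n) = D (θ, x + n) := hshift (fun θ => D (θ, x + n)) (hDθper _) θ m
      _ = D (θ, x) := hshift (fun x => D (θ, x)) (hDxper _) x n
  have hfund : ∀ θ x : ℝ, D (θ, x) = D (Int.fract θ, x - ⌊x⌋) := by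
    intro θ x
    have := hDeq (Int.fract θ) (x - ⌊x⌋) ⌊θ⌋ ⌊x⌋
    rw [show Int.fract θ + (⌊θ⌋:ℝ) = θ by rw [Int.fract]; ring,
      show x - (⌊x⌋:ℝ) + (⌊x⌋:ℝ) = x by ring] at this
    exact this
  set K : Set (ℝ × ℝ) := Set.Icc (0:ℝ) 1 ×ˢ Set.Icc (-1:ℝ) 2 with hKdef
  have hK : IsCompact K := isCompact_Icc.prod isCompact_Icc
  have hKne : K.Nonempty := ⟨(0, 0), by constructor <;> constructor <;> norm_num⟩
  obtain ⟨p₀, hp₀K, hp₀max⟩ := hK.exists_isMaxOn hKne hdcont.continuousOn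
  set M : ℝ := max (D p₀) 1 with hM
  have hM1 : (1:ℝ) ≤ M := le_max_right _ _
  have hM0 : (0:ℝ) < M := lt_of_lt_of_le one_pos hM1
  have hfractmem : ∀ θ x : ℝ, (Int.fract θ, x - ⌊x⌋) ∈ K := by
    intro θ x
    have h1 : (0:ℝ) ≤ Int.fract x := Int.fract_nonneg x
    have h2 : Int.fract x < 1 := Int.fract_lt_one x
    rw [Int.fract] at h1 h2
    exact Set.mem_prod.mpr ⟨Set.mem_Icc.mpr ⟨Int.fract_nonneg θ, (Int.fract_lt_one θ).le⟩,
      Set.mem_Icc.mpr ⟨by dsimp only; linarith, by dsimp only; linarith⟩⟩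
  have hMb : ∀ θ x : ℝ, D (θ, x) ≤ M := by
    intro θ x
    rw [hfund]
    exact le_trans (hp₀max (hfractmem θ x)) (le_max_left _ _)
  -- the function g and its Lyapunov integral
  set L : ℝ × ℝ → ℝ := fun p => Real.log (D p) with hL
  have hLcont : Continuous L := hdcont.log fun p => (hDpos p).ne'
  set g : ℝ → ℝ := fun θ => Real.log (D (θ, φ θ)) with hgdef
  have hgcont : Continuous g := hLcont.comp (continuous_id.prodMk hφc)
  have hgper : Function.Periodic g 1 := by
    intro θ
    show Real.log (D (θ + 1, φ (θ + 1))) = Real.log (D (θ, φ θ))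
    rw [hφper θ]
    exact congrArg Real.log (hDθper (φ θ) θ)
  set lam : ℝ := ∫ θ in (0:ℝ)..1, g θ with hlamdef
  have hlamneg : lam < 0 := hLyap
  set η : ℝ := -lam / 4 with hηdef
  have hηpos : 0 < η := by rw [hηdef]; linarith
  -- uniform continuity on the compact fundamental domain
  have hLuc := hK.uniformContinuousOn_of_continuous hLcont.continuousOn
  rw [Metric.uniformContinuousOn_iff] at hLuc
  obtain ⟨δ₀, hδ₀pos, hδ₀⟩ := hLuc η hηpos
  set δ : ℝ := min (δ₀ / 2) 1 with hδdef
  have hδpos : 0 < δ := lt_min (by linarith) one_pos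
  have hδ1 : δ ≤ 1 := min_le_right _ _
  have hLfund : ∀ θ x : ℝ, L (θ, x) = L (Int.fract θ, x - ⌊x⌋) :=
    fun θ x => congrArg Real.log (hfund θ x)
  have hLδ : ∀ θ x y : ℝ, |y - x| ≤ δ → L (θ, y) ≤ L (θ, x) + η := by
    intro θ x y hxy
    have e1 : L (θ, x) = L (Int.fract θ, x - ⌊x⌋) := hLfund θ x
    have e2 : L (θ, y) = L (Int.fract θ, y - ⌊x⌋) := by
      have h3 := hDeq (Int.fract θ) (y - ⌊x⌋) ⌊θ⌋ ⌊x⌋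
      rw [show Int.fract θ + (⌊θ⌋:ℝ) = θ by rw [Int.fract]; ring,
        show y - (⌊x⌋:ℝ) + (⌊x⌋:ℝ) = y by ring] at h3
      exact congrArg Real.log h3
    have hm1 : (Int.fract θ, x - (⌊x⌋:ℝ)) ∈ K := hfractmem θ x
    have hm2 : (Int.fract θ, y - (⌊x⌋:ℝ)) ∈ K := by
      have h1 : (0:ℝ) ≤ Int.fract x := Int.fract_nonneg x
      have h2 : Int.fract x < 1 := Int.fract_lt_one x
      rw [Int.fract] at h1 h2
      have habs := abs_le.mp hxy
      refine Set.mem_prod.mpr ⟨Set.mem_Icc.mpr ⟨Int.fract_nonneg θ, (Int.fract_lt_one θ).le⟩,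
        Set.mem_Icc.mpr ⟨by dsimp only; linarith, by dsimp only; linarith⟩⟩
    have hdist : dist ((Int.fract θ, y - (⌊x⌋:ℝ)) : ℝ × ℝ) (Int.fract θ, x - (⌊x⌋:ℝ)) < δ₀ := by
      rw [Prod.dist_eq]
      have : dist (y - (⌊x⌋:ℝ)) (x - (⌊x⌋:ℝ)) < δ₀ := by
        rw [Real.dist_eq]
        have : y - (⌊x⌋:ℝ) - (x - (⌊x⌋:ℝ)) = y - x := by ring
        rw [this]
        calc |y - x| ≤ δ := hxy
          _ ≤ δ₀ / 2 := min_le_left _ _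
          _ < δ₀ := by linarith
      simp only [dist_self]
      exact max_lt (by linarith) this
    have h4 := hδ₀ _ hm2 _ hm1 hdist
    rw [Real.dist_eq] at h4
    have h5 := (abs_lt.mp h4).2
    rw [e1, e2]
    linarith
  -- Birkhoff sums
  obtain ⟨N, hNpos, hBirk⟩ := birkhoff_upper ω hω g hgcont hgper (c := lam / 2) (by
    rw [← hlamdef]; linarith)
  have hNR : (0:ℝ) < N := by exact_mod_cast hNpos
  set q : ℝ := Real.exp ((N:ℝ) * (lam / 2) + (N:ℝ) * η) with hqdef
  have hq0 : 0 < q := Real.exp_pos _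
  have hq1 : q < 1 := by
    rw [hqdef, Real.exp_lt_one_iff]
    have : (N:ℝ) * (lam / 2) + (N:ℝ) * η = (N:ℝ) * (lam / 4) := by rw [hηdef]; ring
    rw [this]
    apply mul_neg_of_pos_of_neg hNR
    linarith
  set C0 : ℝ := (M + 1) * Real.exp η with hC0def
  have hexpη1 : (1:ℝ) ≤ Real.exp η := Real.one_le_exp hηpos.le
  have hC0ge1 : (1:ℝ) ≤ C0 := by
    rw [hC0def]
    nlinarith
  have hC0pos : (0:ℝ) < C0 := lt_of_lt_of_le one_pos hC0ge1
  have hgleM : ∀ θ' : ℝ, g θ' ≤ Real.log M := by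
    intro θ'
    exact Real.log_le_log (hDpos _) (hMb _ _)
  have hstepC0 : ∀ θ' : ℝ, Real.exp (g θ' + η) ≤ C0 := by
    intro θ'
    rw [Real.exp_add, hC0def]
    have h1 : Real.exp (g θ') = D (θ', φ θ') := Real.exp_log (hDpos _)
    have h2 : Real.exp (g θ') ≤ M + 1 := by rw [h1]; linarith [hMb θ' (φ θ')]
    exact mul_le_mul_of_nonneg_right h2 (Real.exp_pos _).le |>.trans (le_refl _)
  set ε : ℝ := δ / C0 ^ N with hεdef
  have hC0Npos : (0:ℝ) < C0 ^ N := pow_pos hC0pos N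
  have hC0Nge1 : (1:ℝ) ≤ C0 ^ N := one_le_pow₀ hC0ge1
  have hεpos : 0 < ε := div_pos hδpos hC0Npos
  have hεδ : ε ≤ δ := by
    rw [hεdef]
    exact div_le_self hδpos.le hC0Nge1
  -- mean value inequalities
  have hMVT : ∀ (θ' u v r C : ℝ), |u - v| ≤ r →
      (∀ z ∈ Metric.closedBall v r, D (θ', z) ≤ C) →
      |F θ' u - F θ' v| ≤ C * |u - v| := by
    intro θ' u v r C hur hC
    have hr0 : (0:ℝ) ≤ r := le_trans (abs_nonneg _) hur
    have h := Convex.norm_image_sub_le_of_norm_hasDerivWithin_le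
      (f := F θ') (f' := fun z => deriv (F θ') z) (s := Metric.closedBall v r)
      (fun z _ => ((hdiff θ' z).hasDerivAt).hasDerivWithinAt)
      (fun z hz => by rw [Real.norm_eq_abs, abs_of_pos (hpos θ' z)]; exact hC z hz)
      (convex_closedBall v r) (Metric.mem_closedBall_self hr0)
      (by rw [Metric.mem_closedBall, Real.dist_eq]; exact hur)
    simpa [Real.norm_eq_abs] using h
  have hLip : ∀ (θ' u v : ℝ), |F θ' u - F θ' v| ≤ M * |u - v| := by
    intro θ' u v
    have h := Convex.norm_image_sub_le_of_norm_hasDerivWithin_le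
      (f := F θ') (f' := fun z => deriv (F θ') z) (s := (Set.univ : Set ℝ))
      (fun z _ => ((hdiff θ' z).hasDerivAt).hasDerivWithinAt)
      (fun z _ => by rw [Real.norm_eq_abs, abs_of_pos (hpos θ' z)]; exact hMb θ' z)
      convex_univ (Set.mem_univ v) (Set.mem_univ u)
    simpa [Real.norm_eq_abs] using h
  refine ⟨ε, hεpos, -1, by norm_num, ?_⟩
  intro θ x hx
  set d : ℕ → ℝ := fun k => Fit k θ x - φ (θ + k * ω) with hddef
  have hd0 : |d 0| ≤ ε := by
    have h0 : d 0 = x - φ θ := by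
      rw [hddef]; dsimp only; rw [hFit0]; norm_num
    rw [h0]; exact hx.le
  have hdstep : ∀ k : ℕ, d (k + 1)
      = F (θ + k * ω) (Fit k θ x) - F (θ + k * ω) (φ (θ + k * ω)) := by
    intro k
    rw [hddef]; dsimp only
    rw [hFitS, show (θ + ((k+1 : ℕ) : ℝ) * ω) = θ + (k:ℝ) * ω + ω by push_cast; ring,
      ← hinv (θ + k * ω)]
  have hfine : ∀ k : ℕ, |d k| ≤ δ →
      |d (k + 1)| ≤ Real.exp (g (θ + k * ω) + η) * |d k| := by
    intro k hk
    rw [hdstep k]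
    have hb : ∀ z ∈ Metric.closedBall (φ (θ + k * ω)) δ,
        D (θ + k * ω, z) ≤ Real.exp (g (θ + k * ω) + η) := by
      intro z hz
      rw [Metric.mem_closedBall, Real.dist_eq] at hz
      have h1 : L (θ + k * ω, z) ≤ L (θ + k * ω, φ (θ + k * ω)) + η := hLδ _ _ _ hz
      have h2 : D (θ + k * ω, z) = Real.exp (L (θ + k * ω, z)) :=
        (Real.exp_log (hDpos _)).symm
      rw [h2]
      exact Real.exp_le_exp.mpr h1
    have h3 : |Fit k θ x - φ (θ + k * ω)| ≤ δ := hk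
    exact hMVT (θ + k * ω) (Fit k θ x) (φ (θ + k * ω)) δ _ h3 hb
  have hcrude : ∀ k : ℕ, |d (k + 1)| ≤ M * |d k| := by
    intro k
    rw [hdstep k]
    exact hLip _ _ _
  have hexpgen : ∀ (a kk : ℕ),
      Real.exp (∑ i ∈ Finset.range kk, (g (θ + ((a + i : ℕ)) * ω) + η)) ≤ C0 ^ kk := by
    intro a kk
    have hsum : (∑ i ∈ Finset.range kk, (g (θ + ((a + i : ℕ)) * ω) + η))
        ≤ (kk:ℝ) * (Real.log M + η) := by
      calc (∑ i ∈ Finset.range kk, (g (θ + ((a + i : ℕ)) * ω) + η))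
          ≤ ∑ _i ∈ Finset.range kk, (Real.log M + η) :=
            Finset.sum_le_sum fun i _ => add_le_add_left (hgleM _) _
        _ = (kk:ℝ) * (Real.log M + η) := by
            rw [Finset.sum_const, Finset.card_range, nsmul_eq_mul]
    calc Real.exp (∑ i ∈ Finset.range kk, (g (θ + ((a + i : ℕ)) * ω) + η))
        ≤ Real.exp ((kk:ℝ) * (Real.log M + η)) := Real.exp_le_exp.mpr hsum
      _ = (M * Real.exp η) ^ kk := by
          rw [Real.exp_nat_mul, Real.exp_add, Real.exp_log hM0]
      _ ≤ C0 ^ kk := by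
          refine pow_le_pow_left₀ (by positivity) ?_ kk
          rw [hC0def]
          exact mul_le_mul_of_nonneg_right (by linarith) (Real.exp_pos _).le
  have hInner : ∀ m : ℕ, |d (m * N)| ≤ q ^ m * ε → ∀ k, k ≤ N →
      |d (m * N + k)| ≤ Real.exp (∑ i ∈ Finset.range k,
        (g (θ + ((m * N + i : ℕ)) * ω) + η)) * (q ^ m * ε) := by
    intro m hm k
    induction k with
    | zero => intro _; simpa using hm
    | succ k ih =>
      intro hk1
      have hk' : k ≤ N := Nat.le_of_succ_le hk1
      have hprev := ih hk'
      have hqm1 : q ^ m ≤ 1 := pow_le_one₀ hq0.le hq1.le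
      have hbound : |d (m * N + k)| ≤ δ := by
        calc |d (m * N + k)|
            ≤ Real.exp (∑ i ∈ Finset.range k, (g (θ + ((m * N + i : ℕ)) * ω) + η))
              * (q ^ m * ε) := hprev
          _ ≤ C0 ^ k * (q ^ m * ε) :=
              mul_le_mul_of_nonneg_right (hexpgen _ _) (by positivity)
          _ ≤ C0 ^ N * (1 * ε) := by
              refine mul_le_mul (pow_le_pow_right₀ hC0ge1 hk')
                (mul_le_mul_of_nonneg_right hqm1 hεpos.le) (by positivity) (by positivity)
          _ = C0 ^ N * ε := by ring
          _ = δ := by rw [hεdef]; field_simp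
      have hstep := hfine (m * N + k) hbound
      have heq : m * N + (k + 1) = (m * N + k) + 1 := rfl
      rw [heq]
      calc |d ((m * N + k) + 1)|
          ≤ Real.exp (g (θ + ((m * N + k : ℕ)) * ω) + η) * |d (m * N + k)| := hstep
        _ ≤ Real.exp (g (θ + ((m * N + k : ℕ)) * ω) + η)
            * (Real.exp (∑ i ∈ Finset.range k, (g (θ + ((m * N + i : ℕ)) * ω) + η))
              * (q ^ m * ε)) := mul_le_mul_of_nonneg_left hprev (Real.exp_pos _).le
        _ = Real.exp (∑ i ∈ Finset.range (k+1),
              (g (θ + ((m * N + i : ℕ)) * ω) + η)) * (q ^ m * ε) := by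
            rw [Finset.sum_range_succ,
              Real.exp_add (∑ i ∈ Finset.range k, (g (θ + ((m * N + i : ℕ)) * ω) + η))
                (g (θ + ((m * N + k : ℕ)) * ω) + η)]
            ring
  have hA : ∀ m : ℕ, |d (m * N)| ≤ q ^ m * ε := by
    intro m
    induction m with
    | zero => simpa using hd0
    | succ m ih =>
      have h1 := hInner m ih N le_rfl
      have h2 : (∑ i ∈ Finset.range N, (g (θ + ((m * N + i : ℕ)) * ω) + η))
          ≤ (N:ℝ) * (lam / 2) + (N:ℝ) * η := by
        rw [Finset.sum_add_distrib, Finset.sum_const, Finset.card_range, nsmul_eq_mul]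
        have h3 : (∑ i ∈ Finset.range N, g (θ + ((m * N + i : ℕ)) * ω))
            = ∑ i ∈ Finset.range N, g ((θ + ((m * N : ℕ)) * ω) + i * ω) := by
          refine Finset.sum_congr rfl fun i _ => ?_
          congr 1
          push_cast; ring
        rw [h3]
        have h4 := hBirk (θ + ((m * N : ℕ)) * ω)
        linarith
      have h5 : Real.exp (∑ i ∈ Finset.range N, (g (θ + ((m * N + i : ℕ)) * ω) + η)) ≤ q := by
        rw [hqdef]
        exact Real.exp_le_exp.mpr h2
      calc |d ((m+1) * N)| = |d (m * N + N)| := by rw [Nat.succ_mul]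
        _ ≤ Real.exp (∑ i ∈ Finset.range N, (g (θ + ((m * N + i : ℕ)) * ω) + η))
            * (q ^ m * ε) := h1
        _ ≤ q * (q ^ m * ε) := mul_le_mul_of_nonneg_right h5 (by positivity)
        _ = q ^ (m+1) * ε := by rw [pow_succ]; ring
  have hall : ∀ n : ℕ, |d n| ≤ C0 ^ N * (q ^ (n / N) * ε) := by
    intro n
    have h1 := hInner (n / N) (hA _) (n % N) (Nat.mod_lt n hNpos).le
    have h2 : n / N * N + n % N = n := by
      rw [Nat.mul_comm]
      exact Nat.div_add_mod n N
    rw [h2] at h1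
    calc |d n| ≤ Real.exp (∑ i ∈ Finset.range (n % N),
          (g (θ + ((n / N * N + i : ℕ)) * ω) + η)) * (q ^ (n / N) * ε) := h1
      _ ≤ C0 ^ (n % N) * (q ^ (n / N) * ε) :=
          mul_le_mul_of_nonneg_right (hexpgen _ _) (by positivity)
      _ ≤ C0 ^ N * (q ^ (n / N) * ε) :=
          mul_le_mul_of_nonneg_right
            (pow_le_pow_right₀ hC0ge1 (Nat.mod_lt n hNpos).le) (by positivity)
  have ht1 : Tendsto (fun m : ℕ => q ^ m) atTop (nhds 0) :=
    tendsto_pow_atTop_nhds_zero_of_lt_one hq0.le hq1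
  have ht2 : Tendsto (fun n : ℕ => n / N) atTop atTop := by
    apply Filter.tendsto_atTop_atTop.mpr
    intro b
    exact ⟨b * N, fun n hn => (Nat.le_div_iff_mul_le hNpos).mpr hn⟩
  have ht3 : Tendsto (fun n : ℕ => q ^ (n / N)) atTop (nhds 0) := ht1.comp ht2
  have ht4 : Tendsto (fun n : ℕ => C0 ^ N * (q ^ (n / N) * ε)) atTop (nhds 0) := by
    have h := (ht3.mul_const ε).const_mul (C0 ^ N)
    simpa using h
  have ht5 : Tendsto (fun n : ℕ => |d n|) atTop (nhds 0) :=
    squeeze_zero (fun n => abs_nonneg _) hall ht4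
  exact squeeze_zero (fun n => norm_nonneg _) (fun n => addCircle_norm_le (d n)) ht5
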